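/- Let b and B be distinct primes, both congruent to 3 modulo 4. Then there exist positive integers M and N such that b·M² − B·N² = 1 or B·M² − b·N² = 1. -/

import Mathlib

private lemma nat_sq_of_coprime' {a b c : ℕ} (h : Nat.Coprime a b) (heq : a * b = c ^ 2) :
    ∃ u, a = u ^ 2 :=
  exists_eq_pow_of_mul_eq_pow (by simpa [Nat.isUnit_iff, gcd_eq_nat_gcd] using h) heq

private lemma sq_mod_four (n : ℕ) : n ^ 2 % 4 = 0 ∨ n ^ 2 % 4 = 1 := by
  have h := Nat.mod_two_eq_zero_or_one n
  rcases h with h | h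
  · left
    obtain ⟨c, hc⟩ : ∃ c, n = 2 * c := ⟨n / 2, by omega⟩
    have : n ^ 2 = 4 * c ^ 2 := by rw [hc]; ring
    simp [this, Nat.mul_mod_right]
  · right
    obtain ⟨c, hc⟩ : ∃ c, n = 2 * c + 1 := ⟨n / 2, by omega⟩
    have : n ^ 2 = 4 * (c ^ 2 + c) + 1 := by rw [hc]; ring
    rw [this, Nat.mul_add_mod]

/-- Pell-equation consequence: for distinct primes `b, B ≡ 3 (mod 4)` there exist
positive integers `M, N` with `b·M² − B·N² = 1` or `B·M² − b·N² = 1`. -/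
theorem pell_consequence (b B : ℕ) (hb : b.Prime) (hB : B.Prime) (hne : b ≠ B)
    (hb4 : b % 4 = 3) (hB4 : B % 4 = 3) :
    ∃ M N : ℕ, 0 < M ∧ 0 < N ∧
      ((b : ℤ) * M ^ 2 - B * N ^ 2 = 1 ∨ (B : ℤ) * M ^ 2 - b * N ^ 2 = 1) := by
  classical
  set d := b * B with hd
  have hbpos := hb.pos
  have hBpos := hB.pos
  have hdpos : 0 < d := Nat.mul_pos hbpos hBpos
  have hcopbB : Nat.Coprime b B := (Nat.coprime_primes hb hB).mpr hne
  -- d is not a square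
  have hdsqN : ¬ IsSquare d := by
    rintro ⟨k, hk⟩
    have hbk : b ∣ k := hb.dvd_of_dvd_pow (n := 2) (by rw [sq, ← hk]; exact ⟨B, rfl⟩)
    obtain ⟨j, hj⟩ := hbk
    have : B = b * j ^ 2 := by
      have h1 : b * B = b * (b * j ^ 2) := by rw [← hd, hk, hj]; ring
      exact Nat.eq_of_mul_eq_mul_left hbpos h1
    have : b ∣ B := ⟨j ^ 2, this⟩
    exact hne ((Nat.prime_dvd_prime_iff_eq hb hB).mp this)
  have hdsq : ¬ IsSquare ((d : ℤ)) := fun h => hdsqN (Int.isSquare_natCast_iff.mp h)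
  obtain ⟨x, y, hxy, hy0⟩ := Pell.exists_of_not_isSquare (by exact_mod_cast hdpos) hdsq
  -- a natural number solution
  have hQ : ∃ y' : ℕ, 0 < y' ∧ ∃ x' : ℕ, x' ^ 2 = d * y' ^ 2 + 1 := by
    refine ⟨y.natAbs, Int.natAbs_pos.mpr hy0, x.natAbs, ?_⟩
    have h1 : (x.natAbs : ℤ) ^ 2 = (d : ℤ) * (y.natAbs : ℤ) ^ 2 + 1 := by
      rw [Int.natAbs_sq, Int.natAbs_sq]; linarith
    exact_mod_cast h1
  set Y := Nat.find hQ with hYdef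
  obtain ⟨hYpos, X, hX⟩ := Nat.find_spec hQ
  rw [← hYdef] at hX hYpos
  -- d % 4 = 1
  have hd4 : d % 4 = 1 := by
    have := Nat.mul_mod b B 4
    rw [hb4, hB4] at this; omega
  -- Y is even
  have hY2 : Y % 2 = 0 := by
    by_contra h
    obtain ⟨e, he⟩ : ∃ e, Y = 2 * e + 1 := ⟨Y / 2, by omega⟩
    have hY4 : Y ^ 2 % 4 = 1 := by
      have : Y ^ 2 = 4 * (e ^ 2 + e) + 1 := by rw [he]; ring
      rw [this, Nat.mul_add_mod]
    have hdY : d * Y ^ 2 % 4 = 1 := by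
      have := Nat.mul_mod d (Y ^ 2) 4
      rw [hd4, hY4] at this; omega
    have hX4 := sq_mod_four X
    omega
  obtain ⟨z, hz⟩ : ∃ z, Y = 2 * z := ⟨Y / 2, by omega⟩
  have hzpos : 0 < z := by omega
  -- X is odd
  have hXodd : X % 2 = 1 := by
    have hX4 := sq_mod_four X
    have hdY : d * Y ^ 2 % 4 = 0 := by
      have : d * Y ^ 2 = 4 * (d * z ^ 2) := by rw [hz]; ring
      simp [this, Nat.mul_mod_right]
    have hX41 : X ^ 2 % 4 = 1 := by omega
    rcases Nat.mod_two_eq_zero_or_one X with h | h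
    · exfalso
      obtain ⟨c, hc⟩ : ∃ c, X = 2 * c := ⟨X / 2, by omega⟩
      have : X ^ 2 = 4 * c ^ 2 := by rw [hc]; ring
      rw [this] at hX41; simp [Nat.mul_mod_right] at hX41
    · exact h
  obtain ⟨s, hs⟩ : ∃ s, X = 2 * s + 1 := ⟨X / 2, by omega⟩
  -- key factorization: s * (s + 1) = d * z ^ 2
  have hkey : s * (s + 1) = d * z ^ 2 := by
    have h4 : (4 : ℤ) * (s * (s + 1)) = 4 * (d * z ^ 2) := by
      have hXZ : ((2 * s + 1 : ℕ) : ℤ) ^ 2 = (d : ℤ) * ((2 * z : ℕ) : ℤ) ^ 2 + 1 := by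
        rw [← hs, ← hz]; exact_mod_cast hX
      push_cast at hXZ
      linarith
    have h5 : (s * (s + 1) : ℤ) = (d : ℤ) * z ^ 2 :=
      mul_left_cancel₀ (by norm_num) h4
    exact_mod_cast h5
  have hspos : 0 < s := by
    rcases Nat.eq_zero_or_pos s with h | h
    · exfalso; rw [h] at hkey; simp at hkey
      rcases hkey with h' | h' | h' <;> omega
    · exact h
  have hcop : Nat.Coprime s (s + 1) := by simp
  -- divisibility cases
  have hbdvd : b ∣ s * (s + 1) := by rw [hkey, hd]; exact ⟨B * z ^ 2, by ring⟩
  have hBdvd : B ∣ s * (s + 1) := by rw [hkey, hd]; exact ⟨b * z ^ 2, by ring⟩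
  have hbcase := (Nat.Prime.dvd_mul hb).mp hbdvd
  have hBcase := (Nat.Prime.dvd_mul hB).mp hBdvd
  rcases hbcase with hbs | hbs1 <;> rcases hBcase with hBs | hBs1
  · -- b ∣ s, B ∣ s : contradiction with minimality
    exfalso
    have hds : d ∣ s := hcopbB.mul_dvd_of_dvd_of_dvd hbs hBs
    obtain ⟨t, ht⟩ := hds
    have ht1 : t * (s + 1) = z ^ 2 := by
      have h1 : d * (t * (s + 1)) = d * z ^ 2 := by rw [← hkey, ht]; ring
      exact Nat.eq_of_mul_eq_mul_left hdpos h1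
    have hcopts : Nat.Coprime t (s + 1) :=
      Nat.Coprime.coprime_dvd_left ⟨d, by rw [ht]; ring⟩ hcop
    obtain ⟨u, hu⟩ := nat_sq_of_coprime' hcopts ht1
    obtain ⟨v, hv⟩ := nat_sq_of_coprime' hcopts.symm (by rw [mul_comm]; exact ht1)
    have hupos : 0 < u := by
      rcases Nat.eq_zero_or_pos u with h | h
      · exfalso; rw [h] at hu; simp at hu; rw [hu] at ht; simp at ht; omega
      · exact h
    have hvpos : 0 < v := by
      rcases Nat.eq_zero_or_pos v with h | h
      · exfalso; rw [h] at hv; simp at hv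
      · exact h
    have hzuv : z = u * v := by
      have : z ^ 2 = (u * v) ^ 2 := by rw [← ht1, hu, hv]; ring
      exact Nat.pow_left_injective (by norm_num) this
    have huY : u < Y := by
      have : u ≤ z := by rw [hzuv]; exact Nat.le_mul_of_pos_right u hvpos
      omega
    have hsol : 0 < u ∧ ∃ x', x' ^ 2 = d * u ^ 2 + 1 := by
      refine ⟨hupos, v, ?_⟩
      rw [← hv, ht, hu]
    exact Nat.find_min hQ huY hsol
  · -- b ∣ s, B ∣ s + 1 : answer B * v² - b * u² = 1
    obtain ⟨p, hp⟩ := hbs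
    obtain ⟨q, hq⟩ := hBs1
    have hpq : p * q = z ^ 2 := by
      have h1 : d * (p * q) = d * z ^ 2 := by rw [← hkey, hq, hp, hd]; ring
      exact Nat.eq_of_mul_eq_mul_left hdpos h1
    have hcoppq : Nat.Coprime p q :=
      Nat.Coprime.coprime_dvd_left ⟨b, by rw [hp]; ring⟩
        (Nat.Coprime.coprime_dvd_right ⟨B, by rw [hq]; ring⟩ hcop)
    obtain ⟨u, hu⟩ := nat_sq_of_coprime' hcoppq hpq
    obtain ⟨v, hv⟩ := nat_sq_of_coprime' hcoppq.symm (by rw [mul_comm]; exact hpq)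
    refine ⟨v, u, ?_, ?_, Or.inr ?_⟩
    · rcases Nat.eq_zero_or_pos v with h | h
      · exfalso; rw [h] at hv; simp at hv; rw [hv] at hq; simp at hq
      · exact h
    · rcases Nat.eq_zero_or_pos u with h | h
      · exfalso; rw [h] at hu; simp at hu; rw [hu] at hp; simp at hp; omega
      · exact h
    · have h1 : (B : ℤ) * v ^ 2 = (b : ℤ) * u ^ 2 + 1 := by
        have e1 : B * v ^ 2 = b * u ^ 2 + 1 := by rw [← hv, ← hq, ← hu, ← hp]
        exact_mod_cast e1
      linarith
  · -- b ∣ s + 1, B ∣ s : answer b * u² - B * v² = 1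
    obtain ⟨p, hp⟩ := hBs
    obtain ⟨q, hq⟩ := hbs1
    have hpq : p * q = z ^ 2 := by
      have h1 : d * (p * q) = d * z ^ 2 := by rw [← hkey, hq, hp, hd]; ring
      exact Nat.eq_of_mul_eq_mul_left hdpos h1
    have hcoppq : Nat.Coprime p q :=
      Nat.Coprime.coprime_dvd_left ⟨B, by rw [hp]; ring⟩
        (Nat.Coprime.coprime_dvd_right ⟨b, by rw [hq]; ring⟩ hcop)
    obtain ⟨u, hu⟩ := nat_sq_of_coprime' hcoppq hpq
    obtain ⟨v, hv⟩ := nat_sq_of_coprime' hcoppq.symm (by rw [mul_comm]; exact hpq)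
    refine ⟨v, u, ?_, ?_, Or.inl ?_⟩
    · rcases Nat.eq_zero_or_pos v with h | h
      · exfalso; rw [h] at hv; simp at hv; rw [hv] at hq; simp at hq
      · exact h
    · rcases Nat.eq_zero_or_pos u with h | h
      · exfalso; rw [h] at hu; simp at hu; rw [hu] at hp; simp at hp; omega
      · exact h
    · have h1 : (b : ℤ) * v ^ 2 = (B : ℤ) * u ^ 2 + 1 := by
        have e1 : b * v ^ 2 = B * u ^ 2 + 1 := by rw [← hv, ← hq, ← hu, ← hp]
        exact_mod_cast e1
      linarith
  · -- b ∣ s + 1, B ∣ s + 1 : contradiction with -1 being a square mod b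
    exfalso
    have hds : d ∣ s + 1 := hcopbB.mul_dvd_of_dvd_of_dvd hbs1 hBs1
    obtain ⟨t, ht⟩ := hds
    have ht1 : s * t = z ^ 2 := by
      have h1 : d * (s * t) = d * z ^ 2 := by rw [← hkey, ht]; ring
      exact Nat.eq_of_mul_eq_mul_left hdpos h1
    have hcopst : Nat.Coprime s t :=
      Nat.Coprime.coprime_dvd_right ⟨d, by rw [ht]; ring⟩ hcop
    obtain ⟨u, hu⟩ := nat_sq_of_coprime' hcopst ht1
    have hdvd : b ∣ u ^ 2 + 1 := by
      refine dvd_trans ⟨B, rfl⟩ ?_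
      rw [← hd]
      exact ⟨t, by rw [← hu, ← ht]⟩
    haveI : Fact b.Prime := ⟨hb⟩
    have hsq : IsSquare (-1 : ZMod b) := by
      refine ⟨u, ?_⟩
      have h0 : ((u ^ 2 + 1 : ℕ) : ZMod b) = 0 :=
        (ZMod.natCast_eq_zero_iff _ _).mpr hdvd
      push_cast at h0
      have : ((u : ZMod b)) ^ 2 = -1 := by linear_combination h0
      rw [← this]; ring
    exact ZMod.exists_sq_eq_neg_one_iff.mp hsq hb4
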